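/- Let n ≥ 1, Y ∈ ℝ^n, λ > 0, and let D(z) = (1/n) Σ_{i=1}^n (Y_i − z_i)²/2 be the least squares empirical risk. Then for every z ∈ ℝ^n, the proximal direction equals the gradient direction up to a constant factor: (1/λ)(z − prox_{λ n D}(z)) = (1/(1+λ)) (z − Y) = (n/(1+λ)) ∇D(z). Hence for the least squares loss, proximal boosting's direction of descent coincides with gradient boosting's direction of descent up to the positive scalar factor n/(1+λ). -/

import Mathlib

/-- For the least squares empirical risk, the proximal direction of descent
coincides with the gradient direction up to the positive factor `n/(1+λ)`. -/
theorem prox_direction_eq_gradient_direction_least_squares {n : ℕ} (hn : 1 ≤ n)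
    (Y : EuclideanSpace ℝ (Fin n)) (lam : ℝ) (hlam : 0 < lam)
    (D : EuclideanSpace ℝ (Fin n) → ℝ)
    (hD : ∀ u, D u = (1 / (n : ℝ)) * ∑ i, (Y i - u i) ^ 2 / 2)
    (gradD : EuclideanSpace ℝ (Fin n) → EuclideanSpace ℝ (Fin n))
    (hgradD : ∀ u i, gradD u i = (u i - Y i) / (n : ℝ))
    (z : EuclideanSpace ℝ (Fin n))
    (pz : EuclideanSpace ℝ (Fin n))
    (hpz : IsMinOn (fun u => lam * (n : ℝ) * D u + 1 / 2 * ‖u - z‖ ^ 2) Set.univ pz) :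
    (1 / lam) • (z - pz) = (1 / (1 + lam)) • (z - Y) ∧
      (1 / lam) • (z - pz) = ((n : ℝ) / (1 + lam)) • gradD z := by
  have hn0 : (n : ℝ) ≠ 0 := by
    have : (0:ℕ) < n := hn
    exact_mod_cast this.ne'
  have h1lam : (0:ℝ) < 1 + lam := by linarith
  have h1lam0 : (1:ℝ) + lam ≠ 0 := h1lam.ne'
  have hlam0 : lam ≠ 0 := hlam.ne'
  set c : EuclideanSpace ℝ (Fin n) := WithLp.toLp 2 (fun i => (z i + lam * Y i) / (1 + lam)) with hc
  have hf : ∀ u : EuclideanSpace ℝ (Fin n),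
      lam * (n : ℝ) * D u + 1 / 2 * ‖u - z‖ ^ 2
        = ∑ i, (lam * (Y i - u i) ^ 2 / 2 + (u i - z i) ^ 2 / 2) := by
    intro u
    have hnorm : ‖u - z‖ ^ 2 = ∑ i, (u i - z i) ^ 2 := by
      rw [EuclideanSpace.norm_eq, Real.sq_sqrt (by positivity)]
      refine Finset.sum_congr rfl fun i _ => ?_
      simp [Real.norm_eq_abs, sq_abs]
    rw [hD, hnorm, Finset.mul_sum, Finset.mul_sum, Finset.mul_sum, ← Finset.sum_add_distrib]
    refine Finset.sum_congr rfl fun i _ => ?_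
    field_simp
  have hle : (∑ i, (lam * (Y i - pz i) ^ 2 / 2 + (pz i - z i) ^ 2 / 2))
      ≤ ∑ i, (lam * (Y i - c i) ^ 2 / 2 + (c i - z i) ^ 2 / 2) := by
    have := isMinOn_iff.mp hpz c (Set.mem_univ c)
    rwa [hf pz, hf c] at this
  have hdiff : ∀ i : Fin n,
      (lam * (Y i - pz i) ^ 2 / 2 + (pz i - z i) ^ 2 / 2)
        - (lam * (Y i - c i) ^ 2 / 2 + (c i - z i) ^ 2 / 2)
        = (1 + lam) / 2 * (pz i - c i) ^ 2 := by
    intro i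
    have hci : c i = (z i + lam * Y i) / (1 + lam) := rfl
    rw [hci]
    field_simp
    ring
  have hsum0 : (∑ i, (1 + lam) / 2 * (pz i - c i) ^ 2) ≤ 0 := by
    have : (∑ i, (1 + lam) / 2 * (pz i - c i) ^ 2)
        = (∑ i, (lam * (Y i - pz i) ^ 2 / 2 + (pz i - z i) ^ 2 / 2))
          - ∑ i, (lam * (Y i - c i) ^ 2 / 2 + (c i - z i) ^ 2 / 2) := by
      rw [← Finset.sum_sub_distrib]
      exact Finset.sum_congr rfl fun i _ => (hdiff i).symm
    rw [this]
    linarith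
  have hpzc : ∀ i : Fin n, pz i = c i := by
    intro i
    have hnn : ∀ i ∈ Finset.univ, (0:ℝ) ≤ (1 + lam) / 2 * (pz i - c i) ^ 2 :=
      fun i _ => by positivity
    have hz : (∑ i, (1 + lam) / 2 * (pz i - c i) ^ 2) = 0 :=
      le_antisymm hsum0 (Finset.sum_nonneg hnn)
    have := (Finset.sum_eq_zero_iff_of_nonneg hnn).mp hz i (Finset.mem_univ i)
    have h2 : (pz i - c i) ^ 2 = 0 := by
      have h12 : (1 + lam) / 2 ≠ 0 := by positivity
      exact (mul_eq_zero.mp this).resolve_left h12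
    have := pow_eq_zero_iff (n := 2) (by norm_num) |>.mp h2
    linarith [this]
  constructor
  · ext i
    simp only [PiLp.smul_apply, PiLp.sub_apply, smul_eq_mul, hpzc i]
    rw [show c i = (z i + lam * Y i) / (1 + lam) from rfl]
    field_simp
    ring
  · ext i
    simp only [PiLp.smul_apply, PiLp.sub_apply, smul_eq_mul, hpzc i, hgradD]
    rw [show c i = (z i + lam * Y i) / (1 + lam) from rfl]
    field_simp
    ring
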